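/- Let R be a 2,3-torsion free unital alternative ring with nontrivial idempotent e1 satisfying conditions (1)-(3). Then the centralizer of R12 in R is contained in R12 + Z(R): if a ∈ R commutes with every element of R12, then a ∈ R12 + Z(R). -/

import Mathlib

/-- Peirce idempotents: `pe e1 0 = e1`, `pe e1 1 = 1 - e1`. -/
def pe {R : Type*} [NonAssocRing R] (e1 : R) : Fin 2 → R := ![e1, 1 - e1]

/-- Membership in the Peirce component `R_{ij} = e_i R e_j`. -/
def InP {R : Type*} [NonAssocRing R] (e1 : R) (i j : Fin 2) (x : R) : Prop :=
  ∃ r : R, x = pe e1 i * r * pe e1 j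

/-- Condition (1): `x_{ij} R_{ji} = 0 ⟹ x_{ij} = 0` for `i ≠ j`. -/
def Cond1 {R : Type*} [NonAssocRing R] (e1 : R) : Prop :=
  ∀ i j : Fin 2, i ≠ j → ∀ x : R, InP e1 i j x →
    (∀ y : R, InP e1 j i y → x * y = 0) → x = 0

/-- Condition (2): `x_{11} R_{12} = 0` or `R_{21} x_{11} = 0` implies `x_{11} = 0`. -/
def Cond2 {R : Type*} [NonAssocRing R] (e1 : R) : Prop :=
  ∀ x : R, InP e1 0 0 x →
    ((∀ y : R, InP e1 0 1 y → x * y = 0) ∨ (∀ y : R, InP e1 1 0 y → y * x = 0)) → x = 0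

/-- Condition (3): `R_{12} x_{22} = 0` or `x_{22} R_{21} = 0` implies `x_{22} = 0`. -/
def Cond3 {R : Type*} [NonAssocRing R] (e1 : R) : Prop :=
  ∀ x : R, InP e1 1 1 x →
    ((∀ y : R, InP e1 0 1 y → y * x = 0) ∨ (∀ y : R, InP e1 1 0 y → x * y = 0)) → x = 0


namespace CAux

variable {R : Type*} [NonAssocRing R]

/-- The associator. -/
def aso (x y z : R) : R := x*y*z - x*(y*z)

theorem aso_def (x y z : R) : aso x y z = x*y*z - x*(y*z) := rfl

theorem teich (w x y z : R) :
    aso (w*x) y z - aso w (x*y) z + aso w x (y*z) = w * aso x y z + aso w x y * z := by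
  simp only [aso, mul_sub, sub_mul]; abel

theorem aso_add1 (a b c d : R) : aso (a+b) c d = aso a c d + aso b c d := by
  simp only [aso, add_mul]; abel

theorem aso_add3 (a b c d : R) : aso a b (c+d) = aso a b c + aso a b d := by
  simp only [aso, mul_add]; abel

theorem aso_zero1 (a b : R) : aso 0 a b = 0 := by simp [aso]
theorem aso_zero3 (a b : R) : aso a b 0 = 0 := by simp [aso]

theorem aso_onesub1 (e a b : R) : aso (1-e) a b = -(aso e a b) := by
  simp only [aso, sub_mul, one_mul, mul_sub]; abel

theorem aso_onesub3 (e a b : R) : aso a b (1-e) = -(aso a b e) := by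
  simp only [aso, mul_sub, mul_one, sub_mul]; abel

section Alt

variable (hL : ∀ x y : R, x * x * y = x * (x * y)) (hR : ∀ x y : R, y * x * x = y * (x * x))

include hL in
theorem aso_aa (x y : R) : aso x x y = 0 := by simp [aso, hL]

include hR in
theorem aso_bb (x y : R) : aso y x x = 0 := by simp [aso, hR]

include hL in
theorem swap12 (x y z : R) : aso y x z = -(aso x y z) := by
  have key : aso x y z + aso y x z = aso (x+y) (x+y) z - aso x x z - aso y y z := by
    simp only [aso, add_mul, mul_add]; abel
  rw [aso_aa hL, aso_aa hL, aso_aa hL] at key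
  linear_combination (norm := abel) key

include hR in
theorem swap23 (x y z : R) : aso x z y = -(aso x y z) := by
  have key : aso x y z + aso x z y = aso x (y+z) (y+z) - aso x y y - aso x z z := by
    simp only [aso, add_mul, mul_add]; abel
  rw [aso_bb hR, aso_bb hR, aso_bb hR] at key
  linear_combination (norm := abel) key

include hL hR in
theorem cyc1 (x y z : R) : aso x y z = aso y z x := by
  have h1 := swap12 hL x y z
  have h2 := swap23 hR y x z
  linear_combination (norm := abel) h1 - h2

include hL hR in
theorem cyc2 (x y z : R) : aso x y z = aso z x y := by
  rw [cyc1 hL hR, cyc1 hL hR]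

include hL hR in
theorem swap13 (x y z : R) : aso x y z = -(aso z y x) := by
  rw [cyc1 hL hR, swap12 hL, cyc1 hL hR]

include hL hR in
theorem aso_xyx (x y : R) : aso x y x = 0 := by
  have h := swap23 hR x x y
  rw [aso_aa hL] at h
  rw [h, neg_zero]


section I

variable (h2t : ∀ x : R, (2:ℕ) • x = 0 → x = 0) (h3t : ∀ x : R, (3:ℕ) • x = 0 → x = 0)

include hL hR h2t h3t in
theorem Imain (x y z : R) :
    aso (y*x) z x = x * aso x y z ∧ aso (z*x) y x = -(x * aso x y z) ∧
    aso (x*y) z x = aso x y z * x ∧ aso (x*z) y x = -(aso x y z * x) := by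
  have T1 := teich x y z x
  rw [show aso x (y*z) x = 0 from aso_xyx hL hR x (y*z),
      show aso x y (z*x) = -(aso (z*x) y x) from by
        linear_combination (norm := abel) swap13 hL hR (z*x) y x,
      show aso y z x = aso x y z from (cyc1 hL hR x y z).symm] at T1
  have T2 := teich y x z x
  rw [show aso y (x*z) x = -(aso (x*z) y x) from swap12 hL (x*z) y x,
      show aso y x (z*x) = aso (z*x) y x from cyc2 hL hR y x (z*x),
      show aso x z x = 0 from aso_xyx hL hR x z,
      show aso y x z = -(aso x y z) from swap12 hL x y z] at T2
  have T3 := teich x z y x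
  rw [show aso x (z*y) x = 0 from aso_xyx hL hR x (z*y),
      show aso x z (y*x) = -(aso (y*x) z x) from by
        linear_combination (norm := abel) swap13 hL hR (y*x) z x,
      show aso z y x = -(aso x y z) from by
        linear_combination (norm := abel) swap13 hL hR x y z,
      show aso x z y = -(aso x y z) from swap23 hR x y z] at T3
  have T4 := teich z x y x
  rw [show aso z (x*y) x = -(aso (x*y) z x) from swap12 hL (x*y) z x,
      show aso z x (y*x) = aso (y*x) z x from cyc2 hL hR z x (y*x),
      show aso x y x = 0 from aso_xyx hL hR x y,
      show aso z x y = aso x y z from (cyc2 hL hR x y z).symm] at T4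
  simp only [mul_zero, zero_mul, neg_mul, mul_neg] at T1 T2 T3 T4
  have c1 : aso (y*x) z x + aso (z*x) y x + aso (z*x) y x + x * aso x y z = 0 := by
    linear_combination (norm := abel) T4 - T1
  have c2 : aso (y*x) z x + aso (y*x) z x + aso (z*x) y x - x * aso x y z = 0 := by
    linear_combination (norm := abel) T2 - T3
  have hq3 : (3:ℕ) • (aso (y*x) z x - x * aso x y z) = 0 := by
    linear_combination (norm := abel) c2 + c2 - c1
  have hq : aso (y*x) z x = x * aso x y z := by
    have h := h3t _ hq3; linear_combination (norm := abel) h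
  have hs2 : (2:ℕ) • (aso (z*x) y x + x * aso x y z) = 0 := by
    linear_combination (norm := abel) c1 - hq
  have hs : aso (z*x) y x = -(x * aso x y z) := by
    have h := h2t _ hs2; linear_combination (norm := abel) h
  have hp : aso (x*y) z x = aso x y z * x := by linear_combination (norm := abel) T1 + hs
  have hr : aso (x*z) y x = -(aso x y z * x) := by linear_combination (norm := abel) T3 + hq
  exact ⟨hq, hs, hp, hr⟩

include hL hR h2t h3t in
theorem Iq (x y z : R) : aso (y*x) z x = x * aso x y z := (Imain hL hR h2t h3t x y z).1
include hL hR h2t h3t in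
theorem Is (x y z : R) : aso (z*x) y x = -(x * aso x y z) := (Imain hL hR h2t h3t x y z).2.1
include hL hR h2t h3t in
theorem Ip (x y z : R) : aso (x*y) z x = aso x y z * x := (Imain hL hR h2t h3t x y z).2.2.1
include hL hR h2t h3t in
theorem Ir (x y z : R) : aso (x*z) y x = -(aso x y z * x) := (Imain hL hR h2t h3t x y z).2.2.2

include hL hR h2t h3t in
/-- Left Moufang identity. -/
theorem lMou (x y z : R) : x*y*x*z = x*(y*(x*z)) := by
  have h1 : aso (x*y) x z = -(aso x y z * x) := by
    have := swap23 hR (x*y) z x  -- aso (x*y) x z = -(aso (x*y) z x)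
    rw [Ip hL hR h2t h3t] at this; exact this
  have h2 : aso x y (x*z) = aso x y z * x := by
    have := swap13 hL hR (x*z) y x  -- aso (x*z) y x = -(aso x y (x*z))
    rw [Ir hL hR h2t h3t] at this
    linear_combination (norm := abel) this
  have key : x*y*x*z - x*(y*(x*z)) = aso (x*y) x z + aso x y (x*z) := by
    simp only [aso]; abel
  rw [h1, h2] at key
  linear_combination (norm := abel) key

include hL hR h2t h3t in
/-- Key e-associator constraint lemmas for an idempotent `e`. -/
theorem Tc_es {e : R} (he : e*e = e) {s : R} (hs : e*s = s) (t : R) :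
    aso s t e = aso s t e * e := by
  have h := Ip hL hR h2t h3t e s t  -- aso (e*s) t e = aso e s t * e
  rw [hs, cyc1 hL hR e s t] at h; exact h

include hL hR h2t h3t in
theorem Tc_es0 {e : R} (he : e*e = e) {s : R} (hs : e*s = 0) (t : R) :
    aso s t e * e = 0 := by
  have h := Ip hL hR h2t h3t e s t
  rw [hs, aso_zero1, cyc1 hL hR e s t] at h; exact h.symm

include hL hR h2t h3t in
theorem Tc_se {e : R} (he : e*e = e) {s : R} (hs : s*e = s) (t : R) :
    aso s t e = e * aso s t e := by
  have h := Iq hL hR h2t h3t e s t  -- aso (s*e) t e = e * aso e s t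
  rw [hs, cyc1 hL hR e s t] at h; exact h

include hL hR h2t h3t in
theorem Tc_se0 {e : R} (he : e*e = e) {s : R} (hs : s*e = 0) (t : R) :
    e * aso s t e = 0 := by
  have h := Iq hL hR h2t h3t e s t
  rw [hs, aso_zero1, cyc1 hL hR e s t] at h; exact h.symm

include hL hR h2t h3t in
theorem Tc_et {e : R} (he : e*e = e) {t : R} (ht : e*t = t) (s : R) :
    aso s t e = aso s t e * e := by
  have h := Ir hL hR h2t h3t e s t  -- aso (e*t) s e = -(aso e s t * e)
  rw [ht, cyc1 hL hR e s t, show aso t s e = -(aso s t e) from swap12 hL s t e] at h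
  linear_combination (norm := abel) - h

include hL hR h2t h3t in
theorem Tc_et0 {e : R} (he : e*e = e) {t : R} (ht : e*t = 0) (s : R) :
    aso s t e * e = 0 := by
  have h := Ir hL hR h2t h3t e s t
  rw [ht, aso_zero1, cyc1 hL hR e s t] at h
  linear_combination (norm := abel) h

include hL hR h2t h3t in
theorem Tc_te {e : R} (he : e*e = e) {t : R} (ht : t*e = t) (s : R) :
    aso s t e = e * aso s t e := by
  have h := Is hL hR h2t h3t e s t  -- aso (t*e) s e = -(e * aso e s t)
  rw [ht, cyc1 hL hR e s t, show aso t s e = -(aso s t e) from swap12 hL s t e] at h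
  linear_combination (norm := abel) - h

include hL hR h2t h3t in
theorem Tc_te0 {e : R} (he : e*e = e) {t : R} (ht : t*e = 0) (s : R) :
    e * aso s t e = 0 := by
  have h := Is hL hR h2t h3t e s t
  rw [ht, aso_zero1, cyc1 hL hR e s t] at h
  linear_combination (norm := abel) h

include hR in
/-- `T = 0` when `s*e = s` and `e*t = t`. -/
theorem Tzero1 {e s t : R} (hs : s*e = s) (ht : e*t = t) : aso s t e = 0 := by
  have h2 : aso s e t = 0 := by rw [aso_def, hs, ht]; exact sub_self _
  have h := swap23 hR s e t
  rw [h2, neg_zero] at h; exact h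

include hR in
/-- `T = 0` when `s*e = 0` and `e*t = 0`. -/
theorem Tzero2 {e s t : R} (hs : s*e = 0) (ht : e*t = 0) : aso s t e = 0 := by
  have h2 : aso s e t = 0 := by rw [aso_def, hs, ht, zero_mul, mul_zero]; exact sub_self _
  have h := swap23 hR s e t
  rw [h2, neg_zero] at h; exact h

theorem eMul (e s t : R) : e*(s*t) = (e*s)*t - aso e s t := by
  rw [aso_def]; abel

theorem mulE (e s t : R) : (s*t)*e = s*(t*e) + aso s t e := by
  rw [aso_def]; abel

section Pe

variable {e : R} (he : e*e = e)

include hL hR h2t h3t he in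
theorem Tz_a {s t : R} (hs : s*e = 0) (ht : t*e = t) : aso s t e = 0 :=
  (Tc_te hL hR h2t h3t he ht s).trans (Tc_se0 hL hR h2t h3t he hs t)

include hL hR h2t h3t he in
theorem Tz_b {s t : R} (hs : e*s = s) (ht : e*t = 0) : aso s t e = 0 :=
  (Tc_es hL hR h2t h3t he hs t).trans (Tc_et0 hL hR h2t h3t he ht s)

include hL hR h2t h3t he in
theorem Tz_c {s t : R} (hs : e*s = 0) (ht : e*t = t) : aso s t e = 0 :=
  (Tc_et hL hR h2t h3t he ht s).trans (Tc_es0 hL hR h2t h3t he hs t)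

include hL hR h2t h3t he in
theorem Tz_d {s t : R} (hs : s*e = s) (ht : t*e = 0) : aso s t e = 0 :=
  (Tc_se hL hR h2t h3t he hs t).trans (Tc_te0 hL hR h2t h3t he ht s)

include hL hR in
theorem asoT' {s t : R} (hT : aso s t e = 0) : aso e s t = 0 := by
  rw [cyc1 hL hR e s t]; exact hT

include hR in
/-- If `s*e = 0`, `e*t = t` and `T = 0` then `s*t = 0`. -/
theorem zmulA {s t : R} (hT : aso s t e = 0) (hs : s*e = 0) (ht : e*t = t) : s*t = 0 := by
  have h : aso s e t = 0 := by rw [swap23 hR s t e, hT, neg_zero]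
  rw [aso_def, hs, zero_mul, ht, zero_sub, neg_eq_zero] at h
  exact h

include hR in
/-- If `s*e = s`, `e*t = 0` and `T = 0` then `s*t = 0`. -/
theorem zmulB {s t : R} (hT : aso s t e = 0) (hs : s*e = s) (ht : e*t = 0) : s*t = 0 := by
  have h : aso s e t = 0 := by rw [swap23 hR s t e, hT, neg_zero]
  rw [aso_def, hs, ht, mul_zero, sub_zero] at h
  exact h

include hL hR in
theorem p0000 {s t : R} (hs1 : e*s = s) (hs2 : s*e = s) (ht1 : e*t = t) (ht2 : t*e = t) :
    e*(s*t) = s*t ∧ (s*t)*e = s*t := by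
  have hT : aso s t e = 0 := Tzero1 hR hs2 ht1
  exact ⟨by rw [eMul, asoT' hL hR hT, sub_zero, hs1], by rw [mulE, hT, add_zero, ht2]⟩

include hL hR in
theorem p0001 {s t : R} (hs1 : e*s = s) (hs2 : s*e = s) (ht1 : e*t = t) (ht2 : t*e = 0) :
    e*(s*t) = s*t ∧ (s*t)*e = 0 := by
  have hT : aso s t e = 0 := Tzero1 hR hs2 ht1
  exact ⟨by rw [eMul, asoT' hL hR hT, sub_zero, hs1],
    by rw [mulE, hT, add_zero, ht2, mul_zero]⟩

include hL hR h2t h3t in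
theorem p0101 {s t : R} (hs1 : e*s = s) (hs2 : s*e = 0) (ht1 : e*t = t) (ht2 : t*e = 0) :
    e*(s*t) = 0 ∧ (s*t)*e = s*t := by
  have h1 : e*(s*t) = 0 := by
    have h := lMou hL hR h2t h3t e s t
    rw [hs1, hs2, zero_mul, ht1] at h; exact h.symm
  have hT : aso s t e = s*t := by
    rw [← cyc1 hL hR e s t, aso_def, hs1, h1, sub_zero]
  exact ⟨h1, by rw [mulE, ht2, mul_zero, zero_add, hT]⟩

include hL hR in
theorem p1001 {s t : R} (hs1 : e*s = 0) (hs2 : s*e = s) (ht1 : e*t = t) (ht2 : t*e = 0) :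
    e*(s*t) = 0 ∧ (s*t)*e = 0 := by
  have hT : aso s t e = 0 := Tzero1 hR hs2 ht1
  exact ⟨by rw [eMul, asoT' hL hR hT, sub_zero, hs1, zero_mul],
    by rw [mulE, hT, add_zero, ht2, mul_zero]⟩

include hL hR in
theorem p0110 {s t : R} (hs1 : e*s = s) (hs2 : s*e = 0) (ht1 : e*t = 0) (ht2 : t*e = t) :
    e*(s*t) = s*t ∧ (s*t)*e = s*t := by
  have hT : aso s t e = 0 := Tzero2 hR hs2 ht1
  exact ⟨by rw [eMul, asoT' hL hR hT, sub_zero, hs1], by rw [mulE, hT, add_zero, ht2]⟩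

include hL hR in
theorem p1111 {s t : R} (hs1 : e*s = 0) (hs2 : s*e = 0) (ht1 : e*t = 0) (ht2 : t*e = 0) :
    e*(s*t) = 0 ∧ (s*t)*e = 0 := by
  have hT : aso s t e = 0 := Tzero2 hR hs2 ht1
  exact ⟨by rw [eMul, asoT' hL hR hT, sub_zero, hs1, zero_mul],
    by rw [mulE, hT, add_zero, ht2, mul_zero]⟩

include hL hR in
theorem p1110 {s t : R} (hs1 : e*s = 0) (hs2 : s*e = 0) (ht1 : e*t = 0) (ht2 : t*e = t) :
    e*(s*t) = 0 ∧ (s*t)*e = s*t := by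
  have hT : aso s t e = 0 := Tzero2 hR hs2 ht1
  exact ⟨by rw [eMul, asoT' hL hR hT, sub_zero, hs1, zero_mul],
    by rw [mulE, hT, add_zero, ht2]⟩

include hL hR in
theorem p1000 {s t : R} (hs1 : e*s = 0) (hs2 : s*e = s) (ht1 : e*t = t) (ht2 : t*e = t) :
    e*(s*t) = 0 ∧ (s*t)*e = s*t := by
  have hT : aso s t e = 0 := Tzero1 hR hs2 ht1
  exact ⟨by rw [eMul, asoT' hL hR hT, sub_zero, hs1, zero_mul],
    by rw [mulE, hT, add_zero, ht2]⟩

include hL hR in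
theorem p0111 {s t : R} (hs1 : e*s = s) (hs2 : s*e = 0) (ht1 : e*t = 0) (ht2 : t*e = 0) :
    e*(s*t) = s*t ∧ (s*t)*e = 0 := by
  have hT : aso s t e = 0 := Tzero2 hR hs2 ht1
  exact ⟨by rw [eMul, asoT' hL hR hT, sub_zero, hs1],
    by rw [mulE, hT, add_zero, ht2, mul_zero]⟩

include hL hR h2t h3t he in
theorem z0100 {s t : R} (hs1 : e*s = s) (hs2 : s*e = 0) (ht1 : e*t = t) (ht2 : t*e = t) :
    s*t = 0 :=
  zmulA hR (Tz_a hL hR h2t h3t he hs2 ht2) hs2 ht1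

include hL hR h2t h3t he in
theorem z1101 {s t : R} (hs1 : e*s = 0) (hs2 : s*e = 0) (ht1 : e*t = t) (ht2 : t*e = 0) :
    s*t = 0 :=
  zmulA hR (Tz_c hL hR h2t h3t he hs1 ht1) hs2 ht1

include hL hR h2t h3t he in
theorem z1100 {s t : R} (hs1 : e*s = 0) (hs2 : s*e = 0) (ht1 : e*t = t) (ht2 : t*e = t) :
    s*t = 0 :=
  zmulA hR (Tz_c hL hR h2t h3t he hs1 ht1) hs2 ht1

include hL hR h2t h3t he in
theorem z0010 {s t : R} (hs1 : e*s = s) (hs2 : s*e = s) (ht1 : e*t = 0) (ht2 : t*e = t) :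
    s*t = 0 :=
  zmulB hR (Tz_b hL hR h2t h3t he hs1 ht1) hs2 ht1

include hL hR h2t h3t he in
theorem z1011 {s t : R} (hs1 : e*s = 0) (hs2 : s*e = s) (ht1 : e*t = 0) (ht2 : t*e = 0) :
    s*t = 0 :=
  zmulB hR (Tz_d hL hR h2t h3t he hs2 ht2) hs2 ht1

include hL hR h2t h3t he in
theorem z0011 {s t : R} (hs1 : e*s = s) (hs2 : s*e = s) (ht1 : e*t = 0) (ht2 : t*e = 0) :
    s*t = 0 :=
  zmulB hR (Tz_b hL hR h2t h3t he hs1 ht1) hs2 ht1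

include hL hR h2t h3t in
theorem L1 (x y z w : R) :
    aso (x*y) z w + aso (w*y) z x = aso x y z * w + aso w y z * x := by
  have h := Ip hL hR h2t h3t (x+w) y z
  simp only [add_mul, mul_add, aso_add1, aso_add3] at h
  linear_combination (norm := abel) h - Ip hL hR h2t h3t x y z - Ip hL hR h2t h3t w y z

include hL hR h2t h3t in
theorem L2 (x y z w : R) :
    aso (y*x) z w + aso (y*w) z x = x * aso w y z + w * aso x y z := by
  have h := Iq hL hR h2t h3t (x+w) y z
  simp only [add_mul, mul_add, aso_add1, aso_add3] at h
  linear_combination (norm := abel) h - Iq hL hR h2t h3t x y z - Iq hL hR h2t h3t w y z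

theorem fmul {e s : R} (hs : e*s = 0) : (1-e)*s = s := by
  rw [sub_mul, one_mul, hs, sub_zero]

theorem mulf {e s : R} (hs : s*e = 0) : s*(1-e) = s := by
  rw [mul_sub, mul_one, hs, sub_zero]

include hL hR h2t h3t he in
/-- `(R₁₁, R₁₁, R₁₂)` associator vanishes. -/
theorem AS1 {u v x : R} (hu1 : e*u = u) (hu2 : u*e = u) (hv1 : e*v = v) (hv2 : v*e = v)
    (hx1 : e*x = x) (hx2 : x*e = 0) : aso u v x = 0 := by
  have h1 := L1 hL hR h2t h3t e u v x
  rw [hu1, z0100 hL hR h2t h3t he hx1 hx2 hu1 hu2, aso_zero1,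
      show aso e u v = 0 from asoT' hL hR (Tzero1 hR hu2 hv1), zero_mul,
      show aso x u v = aso u v x from cyc1 hL hR x u v] at h1
  have h2 := teich u v x e
  rw [hx2, aso_zero3,
      show aso (u*v) x e = 0 from Tzero1 hR ((p0000 hL hR hu1 hu2 hv1 hv2).2) hx1,
      show aso u (v*x) e = 0 from Tzero1 hR hu2 ((p0001 hL hR hv1 hv2 hx1 hx2).1),
      show aso v x e = 0 from Tzero1 hR hv2 hx1, mul_zero] at h2
  linear_combination (norm := abel) h1 - h2

include hL hR h2t h3t he in
/-- `(R₁₁, R₁₂, R₂₂)` associator vanishes. -/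
theorem AS2 {u x k : R} (hu1 : e*u = u) (hu2 : u*e = u) (hx1 : e*x = x) (hx2 : x*e = 0)
    (hk1 : e*k = 0) (hk2 : k*e = 0) : aso u x k = 0 := by
  have h1 := L1 hL hR h2t h3t e u x k
  rw [hu1, z1100 hL hR h2t h3t he hk1 hk2 hu1 hu2, aso_zero1,
      show aso e u x = 0 from asoT' hL hR (Tzero1 hR hu2 hx1), zero_mul,
      show aso k u x = aso u x k from cyc1 hL hR k u x] at h1
  have h2 := L1 hL hR h2t h3t (1-e) k x u
  rw [fmul hk1, z0011 hL hR h2t h3t he hu1 hu2 hk1 hk2, aso_zero1,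
      show aso (1-e) k x = 0 from by
        rw [aso_onesub1, cyc1 hL hR e k x, Tz_c hL hR h2t h3t he hk1 hx1, neg_zero],
      zero_mul,
      show aso k x u = -(aso u x k) from by
        rw [cyc2 hL hR k x u]; exact swap23 hR u x k,
      show aso u k x = -(aso u x k) from swap23 hR u x k] at h2
  simp only [mul_sub, mul_one, neg_mul] at h2
  linear_combination (norm := abel) h1 - h2

include hL hR h2t h3t he in
/-- `(R₁₂, R₂₂, R₂₂)` associator vanishes. -/
theorem AS3 {x k m : R} (hx1 : e*x = x) (hx2 : x*e = 0) (hk1 : e*k = 0) (hk2 : k*e = 0)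
    (hm1 : e*m = 0) (hm2 : m*e = 0) : aso x k m = 0 := by
  have h1 := L1 hL hR h2t h3t (1-e) k m x
  rw [fmul hk1,
      show aso (x*k) m (1-e) = 0 from by
        rw [aso_onesub3, Tzero2 hR ((p0111 hL hR hx1 hx2 hk1 hk2).2) hm1, neg_zero],
      show aso (1-e) k m = 0 from by
        rw [aso_onesub1, cyc1 hL hR e k m, Tzero2 hR hk2 hm1, neg_zero],
      zero_mul,
      show aso k m x = aso x k m from (cyc1 hL hR x k m).symm] at h1
  simp only [mul_sub, mul_one] at h1
  have h3 := L1 hL hR h2t h3t e x k m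
  rw [hx1, z1101 hL hR h2t h3t he hm1 hm2 hx1 hx2, aso_zero1,
      show aso e x k = 0 from asoT' hL hR (Tzero2 hR hx2 hk1), zero_mul,
      show aso m x k = aso x k m from cyc1 hL hR m x k] at h3
  linear_combination (norm := abel) h3 + h1

include hL hR h2t h3t he in
/-- `(R₂₁, R₁₂, R₂₂)` associator vanishes. -/
theorem AS4 {y x k : R} (hy1 : e*y = 0) (hy2 : y*e = y) (hx1 : e*x = x) (hx2 : x*e = 0)
    (hk1 : e*k = 0) (hk2 : k*e = 0) : aso y x k = 0 := by
  have h2 := L1 hL hR h2t h3t (1-e) k y x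
  rw [fmul hk1,
      show aso (x*k) y (1-e) = 0 from by
        rw [aso_onesub3, Tzero2 hR ((p0111 hL hR hx1 hx2 hk1 hk2).2) hy1, neg_zero],
      show aso (1-e) k y = 0 from by
        rw [aso_onesub1, cyc1 hL hR e k y, Tzero2 hR hk2 hy1, neg_zero],
      zero_mul,
      show aso k y x = aso y x k from cyc1 hL hR k y x,
      show aso x k y = aso y x k from cyc2 hL hR x k y] at h2
  simp only [mul_sub, mul_one] at h2
  have h3 := L1 hL hR h2t h3t e x k y
  rw [hx1,
      show aso (y*x) k e = 0 from Tzero2 hR ((p1001 hL hR hy1 hy2 hx1 hx2).2) hk1,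
      show aso e x k = 0 from asoT' hL hR (Tzero2 hR hx2 hk1), zero_mul,
      show aso x k y = aso y x k from cyc2 hL hR x k y] at h3
  linear_combination (norm := abel) h3 + h2

include hL hR h2t h3t he in
/-- `(R₂₁, R₁₁, R₁₂)` associator vanishes. -/
theorem AS5 {y u x : R} (hy1 : e*y = 0) (hy2 : y*e = y) (hu1 : e*u = u) (hu2 : u*e = u)
    (hx1 : e*x = x) (hx2 : x*e = 0) : aso y u x = 0 := by
  have h1 := L1 hL hR h2t h3t e u x y
  rw [hu1,
      show aso (y*u) x e = 0 from Tzero1 hR ((p1000 hL hR hy1 hy2 hu1 hu2).2) hx1,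
      show aso e u x = 0 from asoT' hL hR (Tzero1 hR hu2 hx1), zero_mul,
      show aso u x y = aso y u x from cyc2 hL hR u x y] at h1
  have h2 := L2 hL hR h2t h3t e u x y
  rw [hu2, z0010 hL hR h2t h3t he hu1 hu2 hy1 hy2, aso_zero1,
      show aso e u x = 0 from asoT' hL hR (Tzero1 hR hu2 hx1), mul_zero,
      show aso u x y = aso y u x from cyc2 hL hR u x y] at h2
  have h3 := L2 hL hR h2t h3t (1-e) x y u
  rw [mulf hx2, z0100 hL hR h2t h3t he hx1 hx2 hu1 hu2, aso_zero1,
      show aso (1-e) x y = 0 from by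
        rw [aso_onesub1, cyc1 hL hR e x y, Tzero2 hR hx2 hy1, neg_zero],
      mul_zero,
      show aso u x y = aso y u x from cyc2 hL hR u x y,
      show aso x y u = aso y u x from by
        rw [cyc1 hL hR x y u, cyc1 hL hR y u x]] at h3
  simp only [sub_mul, one_mul] at h3
  linear_combination (norm := abel) h2 + h3

include hL hR h3t in
/-- An element commuting with everything is in the nucleus. -/
theorem nuclear_of_comm {z : R} (hz : ∀ w : R, z*w = w*z) (x y : R) : aso x y z = 0 := by
  have e1 : aso z x y = aso x y z := (cyc2 hL hR x y z).symm
  have e2 : aso x z y = -(aso x y z) := swap23 hR x y z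
  have e3 : aso z x y - aso x z y = -(aso x y z) := by
    rw [aso_def, aso_def, aso_def, hz x, hz (x*y), hz y]; abel
  have h3' : (3:ℕ) • aso x y z = 0 := by linear_combination (norm := abel) e3 - e1 + e2
  exact h3t _ h3'

theorem assoc_of_aso {a b c : R} (h : aso a b c = 0) : a*b*c = a*(b*c) := by
  rw [aso_def] at h; linear_combination (norm := abel) h

end Pe

end I

end Alt

theorem pe0 (e : R) : pe e 0 = e := rfl

theorem pe1 (e : R) : pe e 1 = 1 - e := rfl

section Char

variable (hL : ∀ x y : R, x * x * y = x * (x * y)) (hR : ∀ x y : R, y * x * x = y * (x * x))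
variable {e : R} (he : e*e = e)

include hL hR he in
theorem hflex (r : R) : e*(r*e) = (e*r)*e := by
  have h := aso_xyx hL hR e r
  rw [aso_def] at h
  linear_combination (norm := abel) - h

include hL he in
theorem hee (r : R) : e*(e*r) = e*r := by
  have h := aso_aa hL e r
  rw [aso_def, he] at h
  linear_combination (norm := abel) - h

include hR he in
theorem hree (r : R) : (r*e)*e = r*e := by
  have h := aso_bb hR e r
  rw [aso_def, he] at h
  linear_combination (norm := abel) h

include hL hR he in
theorem inP00_iff (x : R) : InP e 0 0 x ↔ e*x = x ∧ x*e = x := by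
  constructor
  · rintro ⟨r, rfl⟩
    rw [pe0]
    constructor
    · rw [hflex hL hR he (e*r), hee hL he r]
    · exact hree hR he (e*r)
  · rintro ⟨h1, h2⟩
    exact ⟨x, by rw [pe0, h1, h2]⟩

include hL hR he in
theorem inP01_iff (x : R) : InP e 0 1 x ↔ e*x = x ∧ x*e = 0 := by
  constructor
  · rintro ⟨r, rfl⟩
    rw [pe0, pe1]
    have h1 : (e*r)*(1-e) = e*r - (e*r)*e := by rw [mul_sub, mul_one]
    constructor
    · rw [h1, mul_sub, hee hL he r, hflex hL hR he (e*r), hee hL he r]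
    · rw [h1, sub_mul, hree hR he (e*r)]
      exact sub_self _
  · rintro ⟨h1, h2⟩
    exact ⟨x, by rw [pe0, pe1, h1, mul_sub, mul_one, h2, sub_zero]⟩

include hL hR he in
theorem inP10_iff (x : R) : InP e 1 0 x ↔ e*x = 0 ∧ x*e = x := by
  constructor
  · rintro ⟨r, rfl⟩
    rw [pe0, pe1]
    have h1 : ((1-e)*r)*e = r*e - (e*r)*e := by rw [sub_mul, one_mul, sub_mul]
    constructor
    · rw [h1, mul_sub, hflex hL hR he r, hflex hL hR he (e*r), hee hL he r]
      exact sub_self _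
    · rw [h1, sub_mul, hree hR he r, hree hR he (e*r)]
  · rintro ⟨h1, h2⟩
    exact ⟨x, by rw [pe0, pe1, sub_mul, one_mul, h1, sub_zero, h2]⟩

include hL hR he in
theorem inP11_iff (x : R) : InP e 1 1 x ↔ e*x = 0 ∧ x*e = 0 := by
  constructor
  · rintro ⟨r, rfl⟩
    rw [pe1]
    have h0 : (1-e)*r = r - e*r := by rw [sub_mul, one_mul]
    have h1 : ((1-e)*r)*(1-e) = (r - e*r) - (r - e*r)*e := by rw [h0, mul_sub, mul_one]
    have h2 : (r - e*r)*e = r*e - (e*r)*e := by rw [sub_mul]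
    constructor
    · rw [h1, mul_sub, mul_sub, hee hL he r, h2, mul_sub,
          hflex hL hR he r, hflex hL hR he (e*r), hee hL he r]
      abel
    · rw [h1, sub_mul, h2, sub_mul, hree hR he r, hree hR he (e*r)]
      abel
  · rintro ⟨h1, h2⟩
    refine ⟨x, ?_⟩
    rw [pe1, sub_mul, one_mul, h1, sub_zero, mul_sub, mul_one, h2, sub_zero]

end Char

theorem extract4 {e p l m n : R} (hp1 : e*p = p) (hp2 : p*e = p) (hl1 : e*l = l) (hl2 : l*e = 0)
    (hm1 : e*m = 0) (hm2 : m*e = m) (hn1 : e*n = 0) (hn2 : n*e = 0)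
    (hsum : p + l + m + n = 0) : p = 0 ∧ l = 0 ∧ m = 0 ∧ n = 0 := by
  have h1 : p + l = 0 := by
    have h := congrArg (e * ·) hsum
    simp only [mul_add, mul_zero, hp1, hl1, hm1, hn1, add_zero] at h
    exact h
  have h2 : p = 0 := by
    have h := congrArg (· * e) h1
    simp only [add_mul, zero_mul, hp2, hl2, add_zero] at h
    exact h
  have h3 : l = 0 := by linear_combination (norm := abel) h1 - h2
  have h4 : m + n = 0 := by linear_combination (norm := abel) hsum - h1
  have h5 : m = 0 := by
    have h := congrArg (· * e) h4
    simp only [add_mul, zero_mul, hm2, hn2, add_zero] at h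
    exact h
  have h6 : n = 0 := by linear_combination (norm := abel) h4 - h5
  exact ⟨h2, h3, h5, h6⟩

theorem decomp (e w : R) :
    w = e*w*e + e*w*(1-e) + (1-e)*w*e + (1-e)*w*(1-e) := by
  simp only [mul_sub, sub_mul, mul_one, one_mul]
  abel

end CAux

/-- the centralizer of $R_{12}$ is contained in $R_{12} + Z(R)$. -/
theorem centralizer_R12_sub (R : Type*) [NonAssocRing R]
    (hAlt1 : ∀ x y : R, x * x * y = x * (x * y))
    (hAlt2 : ∀ x y : R, y * x * x = y * (x * x))
    (h2 : ∀ x : R, (2 : ℕ) • x = 0 → x = 0)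
    (h3 : ∀ x : R, (3 : ℕ) • x = 0 → x = 0)
    (e1 : R) (he : e1 * e1 = e1) (he0 : e1 ≠ 0) (he1 : e1 ≠ 1)
    (hc1 : Cond1 e1) (hc2 : Cond2 e1) (hc3 : Cond3 e1)
    (a : R) (hcomm : ∀ x : R, InP e1 0 1 x → a * x = x * a) :
    ∃ b z : R, InP e1 0 1 b ∧ z ∈ Set.center R ∧ a = b + z := by
  classical
  have hL := hAlt1
  have hR := hAlt2
  open CAux in
  set a11 := e1*a*e1 with ha11
  set a12 := e1*a*(1-e1) with ha12
  set a21 := (1-e1)*a*e1 with ha21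
  set a22 := (1-e1)*a*(1-e1) with ha22
  have hsum : a = a11 + a12 + a21 + a22 := CAux.decomp e1 a
  have m11 : InP e1 0 0 a11 := ⟨a, by rw [CAux.pe0]⟩
  have m12 : InP e1 0 1 a12 := ⟨a, by rw [CAux.pe0, CAux.pe1]⟩
  have m21 : InP e1 1 0 a21 := ⟨a, by rw [CAux.pe0, CAux.pe1]⟩
  have m22 : InP e1 1 1 a22 := ⟨a, by rw [CAux.pe1]⟩
  obtain ⟨e11a, a11e⟩ := (CAux.inP00_iff hL hR he a11).mp m11
  obtain ⟨e12a, a12e⟩ := (CAux.inP01_iff hL hR he a12).mp m12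
  obtain ⟨e21a, a21e⟩ := (CAux.inP10_iff hL hR he a21).mp m21
  obtain ⟨e22a, a22e⟩ := (CAux.inP11_iff hL hR he a22).mp m22
  have hstep : ∀ x : R, e1*x = x → x*e1 = 0 →
      a11*x = x*a22 ∧ a21*x = 0 ∧ x*a21 = 0 := by
    intro x hx1 hx2
    have hc := hcomm x ((CAux.inP01_iff hL hR he x).mpr ⟨hx1, hx2⟩)
    rw [hsum] at hc
    simp only [add_mul, mul_add] at hc
    rw [CAux.z1101 hL hR h2 h3 he e22a a22e hx1 hx2,
        CAux.z0100 hL hR h2 h3 he hx1 hx2 e11a a11e] at hc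
    have hexp : -(x*a21) + (a11*x - x*a22) + (a12*x - x*a12) + a21*x = 0 := by
      linear_combination (norm := abel) hc
    have hp1 : e1*(-(x*a21)) = -(x*a21) := by
      rw [mul_neg, (CAux.p0110 hL hR hx1 hx2 e21a a21e).1]
    have hp2 : (-(x*a21))*e1 = -(x*a21) := by
      rw [neg_mul, (CAux.p0110 hL hR hx1 hx2 e21a a21e).2]
    have hl1 : e1*(a11*x - x*a22) = a11*x - x*a22 := by
      rw [mul_sub, (CAux.p0001 hL hR e11a a11e hx1 hx2).1,
          (CAux.p0111 hL hR hx1 hx2 e22a a22e).1]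
    have hl2 : (a11*x - x*a22)*e1 = 0 := by
      rw [sub_mul, (CAux.p0001 hL hR e11a a11e hx1 hx2).2,
          (CAux.p0111 hL hR hx1 hx2 e22a a22e).2]
      exact sub_self 0
    have hm1 : e1*(a12*x - x*a12) = 0 := by
      rw [mul_sub, (CAux.p0101 hL hR h2 h3 e12a a12e hx1 hx2).1,
          (CAux.p0101 hL hR h2 h3 hx1 hx2 e12a a12e).1]
      exact sub_self 0
    have hm2 : (a12*x - x*a12)*e1 = a12*x - x*a12 := by
      rw [sub_mul, (CAux.p0101 hL hR h2 h3 e12a a12e hx1 hx2).2,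
          (CAux.p0101 hL hR h2 h3 hx1 hx2 e12a a12e).2]
    have hn1 : e1*(a21*x) = 0 := (CAux.p1001 hL hR e21a a21e hx1 hx2).1
    have hn2 : (a21*x)*e1 = 0 := (CAux.p1001 hL hR e21a a21e hx1 hx2).2
    obtain ⟨hP, hLc, hM, hN⟩ := CAux.extract4 hp1 hp2 hl1 hl2 hm1 hm2 hn1 hn2 hexp
    exact ⟨sub_eq_zero.mp hLc, hN, neg_eq_zero.mp hP⟩
  have h21 : a21 = 0 := by
    refine hc1 1 0 (by decide) a21 m21 (fun y hy => ?_)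
    obtain ⟨hy1, hy2⟩ := (CAux.inP01_iff hL hR he y).mp hy
    exact (hstep y hy1 hy2).2.1
  have hI : ∀ x : R, e1*x = x → x*e1 = 0 → a11*x = x*a22 :=
    fun x h1' h2' => (hstep x h1' h2').1
  have hD : ∀ w : R, e1*w = w → w*e1 = w → a11*w = w*a11 := by
    intro w hw1 hw2
    have key : a11*w - w*a11 = 0 := by
      refine hc2 _ ((CAux.inP00_iff hL hR he _).mpr ⟨?_, ?_⟩) (Or.inl fun y hy => ?_)
      · rw [mul_sub, (CAux.p0000 hL hR e11a a11e hw1 hw2).1,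
            (CAux.p0000 hL hR hw1 hw2 e11a a11e).1]
      · rw [sub_mul, (CAux.p0000 hL hR e11a a11e hw1 hw2).2,
            (CAux.p0000 hL hR hw1 hw2 e11a a11e).2]
      · obtain ⟨hy1, hy2⟩ := (CAux.inP01_iff hL hR he y).mp hy
        have hwy := CAux.p0001 hL hR hw1 hw2 hy1 hy2
        have t1 : (a11*w)*y = (w*y)*a22 := by
          rw [CAux.assoc_of_aso (CAux.AS1 hL hR h2 h3 he e11a a11e hw1 hw2 hy1 hy2),
              hI (w*y) hwy.1 hwy.2]
        have t2 : (w*a11)*y = (w*y)*a22 := by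
          rw [CAux.assoc_of_aso (CAux.AS1 hL hR h2 h3 he hw1 hw2 e11a a11e hy1 hy2),
              hI y hy1 hy2,
              ← CAux.assoc_of_aso (CAux.AS2 hL hR h2 h3 he hw1 hw2 hy1 hy2 e22a a22e)]
        rw [sub_mul, t1, t2]; exact sub_self _
    exact sub_eq_zero.mp key
  have hE : ∀ k : R, e1*k = 0 → k*e1 = 0 → a22*k = k*a22 := by
    intro k hk1 hk2
    have key : a22*k - k*a22 = 0 := by
      refine hc3 _ ((CAux.inP11_iff hL hR he _).mpr ⟨?_, ?_⟩) (Or.inl fun y hy => ?_)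
      · rw [mul_sub, (CAux.p1111 hL hR e22a a22e hk1 hk2).1,
            (CAux.p1111 hL hR hk1 hk2 e22a a22e).1]
        exact sub_self 0
      · rw [sub_mul, (CAux.p1111 hL hR e22a a22e hk1 hk2).2,
            (CAux.p1111 hL hR hk1 hk2 e22a a22e).2]
        exact sub_self 0
      · obtain ⟨hy1, hy2⟩ := (CAux.inP01_iff hL hR he y).mp hy
        have hyk := CAux.p0111 hL hR hy1 hy2 hk1 hk2
        have t1 : y*(a22*k) = (y*k)*a22 := by
          rw [← CAux.assoc_of_aso (CAux.AS3 hL hR h2 h3 he hy1 hy2 e22a a22e hk1 hk2),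
              ← hI y hy1 hy2,
              CAux.assoc_of_aso (CAux.AS2 hL hR h2 h3 he e11a a11e hy1 hy2 hk1 hk2),
              hI (y*k) hyk.1 hyk.2]
        have t2 : y*(k*a22) = (y*k)*a22 := by
          rw [← CAux.assoc_of_aso (CAux.AS3 hL hR h2 h3 he hy1 hy2 hk1 hk2 e22a a22e)]
        rw [mul_sub, t1, t2]; exact sub_self _
    exact sub_eq_zero.mp key
  have hA : ∀ y : R, e1*y = 0 → y*e1 = y → a22*y = y*a11 := by
    intro y hy1 hy2
    have key : a22*y - y*a11 = 0 := by
      refine hc1 1 0 (by decide) _ ((CAux.inP10_iff hL hR he _).mpr ⟨?_, ?_⟩)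
        (fun x hx => ?_)
      · rw [mul_sub, (CAux.p1110 hL hR e22a a22e hy1 hy2).1,
            (CAux.p1000 hL hR hy1 hy2 e11a a11e).1]
        exact sub_self 0
      · rw [sub_mul, (CAux.p1110 hL hR e22a a22e hy1 hy2).2,
            (CAux.p1000 hL hR hy1 hy2 e11a a11e).2]
      · obtain ⟨hx1, hx2⟩ := (CAux.inP01_iff hL hR he x).mp hx
        have hyx := CAux.p1001 hL hR hy1 hy2 hx1 hx2
        have as4 : CAux.aso y x a22 = 0 :=
          CAux.AS4 hL hR h2 h3 he hy1 hy2 hx1 hx2 e22a a22e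
        have t1 : (a22*y)*x = (y*x)*a22 := by
          have h0 : CAux.aso a22 y x = 0 := by
            rw [CAux.cyc1 hL hR a22 y x]; exact as4
          rw [CAux.assoc_of_aso h0, hE (y*x) hyx.1 hyx.2]
        have t2 : (y*a11)*x = (y*x)*a22 := by
          rw [CAux.assoc_of_aso (CAux.AS5 hL hR h2 h3 he hy1 hy2 e11a a11e hx1 hx2),
              hI x hx1 hx2, ← CAux.assoc_of_aso as4]
        rw [sub_mul, t1, t2]; exact sub_self _
    exact sub_eq_zero.mp key
  have hzcomm : ∀ w : R, (a11 + a22)*w = w*(a11 + a22) := by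
    intro w
    have hw : w = e1*w*e1 + e1*w*(1-e1) + (1-e1)*w*e1 + (1-e1)*w*(1-e1) := CAux.decomp e1 w
    set w11 := e1*w*e1 with hw11
    set w12 := e1*w*(1-e1) with hw12
    set w21 := (1-e1)*w*e1 with hw21
    set w22 := (1-e1)*w*(1-e1) with hw22
    obtain ⟨f11, g11⟩ := (CAux.inP00_iff hL hR he w11).mp ⟨w, by rw [CAux.pe0]⟩
    obtain ⟨f12, g12⟩ :=
      (CAux.inP01_iff hL hR he w12).mp ⟨w, by rw [CAux.pe0, CAux.pe1]⟩
    obtain ⟨f21, g21⟩ :=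
      (CAux.inP10_iff hL hR he w21).mp ⟨w, by rw [CAux.pe0, CAux.pe1]⟩
    obtain ⟨f22, g22⟩ := (CAux.inP11_iff hL hR he w22).mp ⟨w, by rw [CAux.pe1]⟩
    have c11 : a11*w11 = w11*a11 := hD w11 f11 g11
    have c11' : a22*w11 = 0 := CAux.z1100 hL hR h2 h3 he e22a a22e f11 g11
    have c11'' : w11*a22 = 0 := CAux.z0011 hL hR h2 h3 he f11 g11 e22a a22e
    have c12 : a11*w12 = w12*a22 := hI w12 f12 g12
    have c12' : a22*w12 = 0 := CAux.z1101 hL hR h2 h3 he e22a a22e f12 g12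
    have c12'' : w12*a11 = 0 := CAux.z0100 hL hR h2 h3 he f12 g12 e11a a11e
    have c21 : a22*w21 = w21*a11 := hA w21 f21 g21
    have c21' : a11*w21 = 0 := CAux.z0010 hL hR h2 h3 he e11a a11e f21 g21
    have c21'' : w21*a22 = 0 := CAux.z1011 hL hR h2 h3 he f21 g21 e22a a22e
    have c22 : a22*w22 = w22*a22 := hE w22 f22 g22
    have c22' : a11*w22 = 0 := CAux.z0011 hL hR h2 h3 he e11a a11e f22 g22
    have c22'' : w22*a11 = 0 := CAux.z1100 hL hR h2 h3 he f22 g22 e11a a11e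
    rw [hw]
    simp only [mul_add, add_mul]
    rw [c11, c12, c21, c22, c11', c12', c21', c22', c11'', c12'', c21'', c22'']
    abel
  have hnuc : ∀ x y : R, CAux.aso x y (a11+a22) = 0 :=
    CAux.nuclear_of_comm hL hR h3 hzcomm
  refine ⟨a12, a11 + a22, m12, ?_, ?_⟩
  · rw [Set.mem_center_iff]
    refine ⟨hzcomm, ?_, ?_⟩
    · intro b c
      have h0 : CAux.aso (a11+a22) b c = 0 := by
        rw [CAux.cyc1 hL hR (a11+a22) b c]; exact hnuc b c
      exact (CAux.assoc_of_aso h0).symm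
    · intro b c
      exact CAux.assoc_of_aso (hnuc b c)
  · linear_combination (norm := abel) hsum + h21
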